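/- Let E be a category with finite limits and φ : E → E' ⊆ E a left-exact reflector onto a reflective full subcategory. Then the class L_φ of maps inverted by φ is the left class of a factorization system (L_φ, R_φ), where a map f : X → Y belongs to R_φ if and only if the naturality square formed by the unit maps η(X) : X → φ(X), η(Y) : Y → φ(Y), f, and φ(f) is cartesian. -/

import Mathlib

/-!
STATEMENT 5: the maps inverted by a left-exact reflector form the left class of a factorization system, whose right class is given by cartesian unit naturality squares.
-/

open CategoryTheory CategoryTheory.Limits

universe w v u

namespace Paper

variable {E : Type u} [Category.{v} E]

/-- `u` is left orthogonal to `f`: every commutative square from `u` to `f` admits a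
unique diagonal filler. -/
def Orth {A B X Y : E} (u : A ⟶ B) (f : X ⟶ Y) : Prop :=
  ∀ (x : A ⟶ X) (y : B ⟶ Y), x ≫ f = u ≫ y → ∃! d : B ⟶ X, u ≫ d = x ∧ d ≫ f = y

/-- A factorization system `(L, R)`: two replete classes of maps with `L` orthogonal to
`R`, such that every map factors as a map in `L` followed by a map in `R`. -/
structure FactorizationSystem (E : Type u) [Category.{v} E] where
  /-- the left class -/
  L : MorphismProperty E
  /-- the right class -/
  R : MorphismProperty E
  replete_L : ∀ ⦃X Y X' Y' : E⦄ (f : X ⟶ Y) (f' : X' ⟶ Y'),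
    (Arrow.mk f ≅ Arrow.mk f') → L f → L f'
  replete_R : ∀ ⦃X Y X' Y' : E⦄ (f : X ⟶ Y) (f' : X' ⟶ Y'),
    (Arrow.mk f ≅ Arrow.mk f') → R f → R f'
  orth : ∀ ⦃A B X Y : E⦄ (u : A ⟶ B) (f : X ⟶ Y), L u → R f → Orth u f
  fac : ∀ ⦃X Y : E⦄ (f : X ⟶ Y), ∃ (Z : E) (l : X ⟶ Z) (r : Z ⟶ Y),
    L l ∧ R r ∧ l ≫ r = f

/-- `P` is stable under base change: any pullback of a map in `P` is in `P`. -/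
def StableUnderBaseChange' (P : MorphismProperty E) : Prop :=
  ∀ ⦃W X Y Z : E⦄ (fst : W ⟶ X) (snd : W ⟶ Y) (f : X ⟶ Z) (g : Y ⟶ Z),
    IsPullback fst snd f g → P f → P snd

end Paper

namespace Paper

universe v₂ u₂
variable {E : Type u} [Category.{v} E]


section Aux

set_option linter.unusedSectionVars false

variable {E' : Type u₂} [Category.{v₂} E'] {ι : E' ⥤ E} [ι.Full] [ι.Faithful]
    {φ : E ⥤ E'} (adj : φ ⊣ ι)

private lemma unit_natural' {X Y : E} (f : X ⟶ Y) :
    adj.unit.app X ≫ (φ ⋙ ι).map f = f ≫ adj.unit.app Y := by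
  simpa using (adj.unit.naturality f).symm

private lemma unit_phi_isIso' (X : E) : IsIso (φ.map (adj.unit.app X)) := by
  have h := adj.left_triangle_components X
  refine ⟨adj.counit.app (φ.obj X), h, ?_⟩
  rw [← cancel_mono (adj.counit.app (φ.obj X)), Category.assoc, h]
  simp

private lemma unit_iota_isIso' (A : E') : IsIso (adj.unit.app (ι.obj A)) := by
  have h := adj.right_triangle_components A
  refine ⟨ι.map (adj.counit.app A), h, ?_⟩
  rw [← cancel_mono (ι.map (adj.counit.app A)), Category.assoc, h]
  simp

private lemma T_unit_eq' (Y : E) :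
    (φ ⋙ ι).map (adj.unit.app Y) = adj.unit.app ((φ ⋙ ι).obj Y) := by
  have h1 : ι.map (φ.map (adj.unit.app Y)) ≫ ι.map (adj.counit.app (φ.obj Y)) =
      𝟙 (ι.obj (φ.obj Y)) := by
    rw [← ι.map_comp]
    have := adj.left_triangle_components Y
    rw [this]
    exact ι.map_id _
  have h2 : adj.unit.app (ι.obj (φ.obj Y)) ≫ ι.map (adj.counit.app (φ.obj Y)) =
      𝟙 (ι.obj (φ.obj Y)) := adj.right_triangle_components (φ.obj Y)
  show ι.map (φ.map (adj.unit.app Y)) = adj.unit.app (ι.obj (φ.obj Y))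
  rw [← cancel_mono (ι.map (adj.counit.app (φ.obj Y))), h1, h2]

private lemma isIso_fst_of_isIso' {P X Y Z : E} {fst : P ⟶ X} {snd : P ⟶ Y} {f : X ⟶ Z}
    {g : Y ⟶ Z} (h : IsPullback fst snd f g) [IsIso g] : IsIso fst := by
  refine ⟨h.lift (𝟙 X) (f ≫ inv g) (by simp), ?_, by simp⟩
  apply h.hom_ext
  · simp
  · rw [Category.assoc, IsPullback.lift_snd, ← Category.assoc, h.w]
    simp

private lemma repleteL' ⦃X Y X' Y' : E⦄ (f : X ⟶ Y) (f' : X' ⟶ Y')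
    (e : Arrow.mk f ≅ Arrow.mk f') (hf : IsIso (φ.map f)) : IsIso (φ.map f') := by
  have w : e.hom.left ≫ f' = f ≫ e.hom.right := Arrow.w e.hom
  have hf' : f' = inv e.hom.left ≫ f ≫ e.hom.right := by
    rw [IsIso.eq_inv_comp]; exact w
  rw [hf', φ.map_comp, φ.map_comp]
  haveI := hf
  infer_instance

private lemma repleteR' ⦃X Y X' Y' : E⦄ (f : X ⟶ Y) (f' : X' ⟶ Y')
    (e : Arrow.mk f ≅ Arrow.mk f')
    (hf : IsPullback (adj.unit.app X) f ((φ ⋙ ι).map f) (adj.unit.app Y)) :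
    IsPullback (adj.unit.app X') f' ((φ ⋙ ι).map f') (adj.unit.app Y') := by
  have w : e.hom.left ≫ f' = f ≫ e.hom.right := Arrow.w e.hom
  refine hf.of_iso (Arrow.leftFunc.mapIso e) ((φ ⋙ ι).mapIso (Arrow.leftFunc.mapIso e))
    (Arrow.rightFunc.mapIso e) ((φ ⋙ ι).mapIso (Arrow.rightFunc.mapIso e)) ?_ ?_ ?_ ?_
  · exact (adj.unit.naturality e.hom.left).symm
  · exact w.symm
  · dsimp
    show (φ ⋙ ι).map f ≫ (φ ⋙ ι).map e.hom.right = (φ ⋙ ι).map e.hom.left ≫ (φ ⋙ ι).map f'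
    rw [← Functor.map_comp, ← Functor.map_comp, w]
  · exact (adj.unit.naturality e.hom.right).symm

private lemma orth_aux' {A B X Y : E} (u : A ⟶ B) (f : X ⟶ Y) (hu : IsIso (φ.map u))
    (hf : IsPullback (adj.unit.app X) f ((φ ⋙ ι).map f) (adj.unit.app Y)) :
    Orth u f := by
  intro x y hxy
  haveI := hu
  set t : B ⟶ ι.obj (φ.obj X) := adj.unit.app B ≫ ι.map (inv (φ.map u) ≫ φ.map x) with ht_def
  have key : (inv (φ.map u) ≫ φ.map x) ≫ φ.map f = φ.map y := by
    rw [Category.assoc, ← φ.map_comp, hxy, φ.map_comp, IsIso.inv_hom_id_assoc]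
  have ht : t ≫ (φ ⋙ ι).map f = y ≫ adj.unit.app Y := by
    rw [ht_def, Category.assoc, Functor.comp_map, ← ι.map_comp, key, ← Functor.comp_map,
      unit_natural' adj y]
  have hut : u ≫ t = x ≫ adj.unit.app X := by
    rw [ht_def, ← Category.assoc, ← unit_natural' adj u, Category.assoc, Functor.comp_map,
      ← ι.map_comp]
    rw [show φ.map u ≫ inv (φ.map u) ≫ φ.map x = φ.map x by simp]
    rw [← Functor.comp_map, unit_natural' adj x]
  refine ⟨hf.lift t y ht, ⟨?_, hf.lift_snd t y ht⟩, ?_⟩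
  · apply hf.hom_ext
    · rw [Category.assoc, hf.lift_fst, hut]
    · rw [Category.assoc, hf.lift_snd, hxy]
  · rintro d' ⟨h1, h2⟩
    apply hf.hom_ext
    · rw [hf.lift_fst]
      have hd : φ.map d' = inv (φ.map u) ≫ φ.map x := by
        rw [IsIso.eq_inv_comp, ← φ.map_comp, h1]
      rw [← unit_natural' adj d', Functor.comp_map, hd, ht_def]
    · rw [hf.lift_snd, h2]

private lemma fac_aux' [HasFiniteLimits E] [PreservesFiniteLimits φ] {X Y : E} (f : X ⟶ Y) :
    ∃ (Z : E) (l : X ⟶ Z) (r : Z ⟶ Y), IsIso (φ.map l) ∧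
      IsPullback (adj.unit.app Z) r ((φ ⋙ ι).map r) (adj.unit.app Y) ∧ l ≫ r = f := by
  let Z := pullback ((φ ⋙ ι).map f) (adj.unit.app Y)
  have hp : IsPullback (pullback.fst ((φ ⋙ ι).map f) (adj.unit.app Y))
      (pullback.snd ((φ ⋙ ι).map f) (adj.unit.app Y)) ((φ ⋙ ι).map f) (adj.unit.app Y) :=
    IsPullback.of_hasPullback _ _
  let l : X ⟶ Z := pullback.lift (adj.unit.app X) f (unit_natural' adj f)
  haveI hηY : IsIso (φ.map (adj.unit.app Y)) := unit_phi_isIso' adj Y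
  have hp2 := φ.map_isPullback hp
  haveI hfst : IsIso (φ.map (pullback.fst ((φ ⋙ ι).map f) (adj.unit.app Y))) :=
    isIso_fst_of_isIso' hp2
  haveI hηX : IsIso (φ.map (adj.unit.app X)) := unit_phi_isIso' adj X
  have hl : IsIso (φ.map l) := by
    have w : φ.map l ≫ φ.map (pullback.fst ((φ ⋙ ι).map f) (adj.unit.app Y)) =
        φ.map (adj.unit.app X) := by
      rw [← φ.map_comp, pullback.lift_fst]
    exact IsIso.of_isIso_fac_right w
  haveI hTfst : IsIso ((φ ⋙ ι).map (pullback.fst ((φ ⋙ ι).map f) (adj.unit.app Y))) := by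
    show IsIso (ι.map (φ.map _))
    infer_instance
  haveI hηTX : IsIso (adj.unit.app ((φ ⋙ ι).obj X)) := unit_iota_isIso' adj (φ.obj X)
  set jh : (φ ⋙ ι).obj Z ⟶ (φ ⋙ ι).obj X :=
    (φ ⋙ ι).map (pullback.fst ((φ ⋙ ι).map f) (adj.unit.app Y)) ≫
      inv (adj.unit.app ((φ ⋙ ι).obj X)) with jh_def
  haveI : IsIso jh := by rw [jh_def]; infer_instance
  have hr : IsPullback (adj.unit.app Z) (pullback.snd ((φ ⋙ ι).map f) (adj.unit.app Y))
      ((φ ⋙ ι).map (pullback.snd ((φ ⋙ ι).map f) (adj.unit.app Y))) (adj.unit.app Y) := by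
    refine hp.of_iso (Iso.refl Z) (asIso jh).symm (Iso.refl Y) (Iso.refl ((φ ⋙ ι).obj Y))
      ?_ ?_ ?_ ?_
    · show pullback.fst ((φ ⋙ ι).map f) (adj.unit.app Y) ≫ inv jh = 𝟙 Z ≫ adj.unit.app Z
      rw [Category.id_comp, IsIso.comp_inv_eq, jh_def, ← Category.assoc,
        unit_natural' adj (pullback.fst ((φ ⋙ ι).map f) (adj.unit.app Y))]
      simp
    · exact (Category.comp_id _).trans (Category.id_comp _).symm
    · show (φ ⋙ ι).map f ≫ 𝟙 _ =
        inv jh ≫ (φ ⋙ ι).map (pullback.snd ((φ ⋙ ι).map f) (adj.unit.app Y))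
      haveI hηTY : IsIso (adj.unit.app ((φ ⋙ ι).obj Y)) := unit_iota_isIso' adj (φ.obj Y)
      have hnat : inv (adj.unit.app ((φ ⋙ ι).obj X)) ≫ (φ ⋙ ι).map f =
          (φ ⋙ ι).map ((φ ⋙ ι).map f) ≫ inv (adj.unit.app ((φ ⋙ ι).obj Y)) := by
        rw [IsIso.inv_comp_eq, ← Category.assoc, unit_natural' adj ((φ ⋙ ι).map f)]
        simp
      rw [Category.comp_id, eq_comm, IsIso.inv_comp_eq, jh_def, Category.assoc, hnat,
        ← Category.assoc, ← Functor.map_comp, hp.w, Functor.map_comp, T_unit_eq' adj Y]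
      simp
    · exact (Category.comp_id _).trans (Category.id_comp _).symm
  exact ⟨Z, l, pullback.snd _ _, hl, hr, pullback.lift_snd _ _ _⟩

end Aux

/-- if `φ : E ⥤ E'` is a left-exact reflector onto a reflective full
subcategory (`ι` fully faithful, `φ ⊣ ι`, `φ` preserves finite limits), then the class
`L_φ` of maps inverted by `φ` is the left class of a factorization system whose right
class consists of the maps `f` such that the unit naturality square is cartesian. -/
theorem factorizationSystem_of_lex_reflector [HasFiniteLimits E]
    {E' : Type u₂} [Category.{v₂} E'] (ι : E' ⥤ E) [ι.Full] [ι.Faithful]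
    (φ : E ⥤ E') (adj : φ ⊣ ι) [PreservesFiniteLimits φ] :
    ∃ S : FactorizationSystem E,
      (∀ ⦃X Y : E⦄ (f : X ⟶ Y), S.L f ↔ IsIso (φ.map f)) ∧
      (∀ ⦃X Y : E⦄ (f : X ⟶ Y), S.R f ↔
        IsPullback (adj.unit.app X) f ((φ ⋙ ι).map f) (adj.unit.app Y)) := by
  refine ⟨{
    L := fun _ _ f => IsIso (φ.map f)
    R := fun X Y f => IsPullback (adj.unit.app X) f ((φ ⋙ ι).map f) (adj.unit.app Y)
    replete_L := fun _ _ _ _ f f' e hf => repleteL' f f' e hf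
    replete_R := fun _ _ _ _ f f' e hf => repleteR' adj f f' e hf
    orth := fun _ _ _ _ u f hu hf => orth_aux' adj u f hu hf
    fac := fun _ _ f => fac_aux' adj f },
    fun _ _ _ => Iff.rfl, fun _ _ _ => Iff.rfl⟩

end Paper
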